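/- The function h defined by h(x) = ∑_{m=−∞}^{∞} 2^{2x−2m} exp(−2^{x−m}) converges for every real x, satisfies h(x+1) = h(x) for every real x, and is bounded: there is a constant M such that h(x) ≤ M for all real x. -/

import Mathlib

open Real

/-- `h(x) = ∑_{m=-∞}^{∞} 2^{2x-2m} exp(-2^{x-m})`, summed over all `m : ℤ`. -/
noncomputable def h (x : ℝ) : ℝ :=
  ∑' m : ℤ, (2 : ℝ) ^ (2 * x - 2 * (m : ℝ)) * Real.exp (-(2 : ℝ) ^ (x - (m : ℝ)))

noncomputable def F (x : ℝ) (m : ℤ) : ℝ :=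
  (2 : ℝ) ^ (2 * x - 2 * (m : ℝ)) * Real.exp (-(2 : ℝ) ^ (x - (m : ℝ)))

lemma g_le (t : ℝ) :
    (2 : ℝ) ^ (2 * t) * Real.exp (-(2 : ℝ) ^ t) ≤ 27 * (2 : ℝ) ^ (-|t|) := by
  have h2 : (1 : ℝ) ≤ 2 := one_le_two
  have hu : (0 : ℝ) < (2 : ℝ) ^ t := Real.rpow_pos_of_pos two_pos t
  rcases le_or_gt t 0 with ht | ht
  · rw [abs_of_nonpos ht, neg_neg]
    have h1 : Real.exp (-(2 : ℝ) ^ t) ≤ 1 := Real.exp_le_one_iff.2 (by linarith)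
    have h2' : (2 : ℝ) ^ (2 * t) ≤ (2 : ℝ) ^ t :=
      Real.rpow_le_rpow_of_exponent_le h2 (by linarith)
    nlinarith [Real.rpow_pos_of_pos two_pos (2 * t), Real.rpow_pos_of_pos two_pos t]
  · rw [abs_of_pos ht]
    set u : ℝ := (2 : ℝ) ^ t with hudef
    have hcube : (u / 3) ^ 3 ≤ Real.exp u := by
      have h1 : u / 3 ≤ Real.exp (u / 3) := by
        have := Real.add_one_le_exp (u / 3); linarith
      calc (u / 3) ^ 3 ≤ Real.exp (u / 3) ^ 3 :=
            pow_le_pow_left₀ (by positivity) h1 3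
        _ = Real.exp (3 * (u / 3)) := by
            rw [← Real.exp_nat_mul]; norm_num
        _ = Real.exp u := by ring_nf
    have hexp : Real.exp (-u) ≤ 27 / u ^ 3 := by
      rw [Real.exp_neg]
      calc (Real.exp u)⁻¹ ≤ ((u / 3) ^ 3)⁻¹ := by
            apply inv_anti₀ (by positivity) hcube
        _ = 27 / u ^ 3 := by
            rw [div_pow, inv_div]; norm_num
    have hu3 : u ^ 3 = (2 : ℝ) ^ (3 * t) := by
      rw [hudef, ← Real.rpow_natCast ((2:ℝ) ^ t) 3, ← Real.rpow_mul (by norm_num)]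
      norm_num; ring_nf
    calc (2 : ℝ) ^ (2 * t) * Real.exp (-u) ≤ (2 : ℝ) ^ (2 * t) * (27 / u ^ 3) := by
          apply mul_le_mul_of_nonneg_left hexp (le_of_lt (Real.rpow_pos_of_pos two_pos _))
      _ = 27 * ((2 : ℝ) ^ (2 * t) / (2 : ℝ) ^ (3 * t)) := by rw [hu3]; ring
      _ = 27 * (2 : ℝ) ^ (-t) := by
          rw [← Real.rpow_sub two_pos]; ring_nf

lemma c_summable : Summable (fun m : ℤ => (2 : ℝ) ^ (-|(m : ℝ)|)) := by
  have key : ∀ m : ℤ, (2 : ℝ) ^ (-|(m : ℝ)|) = (1 / 2 : ℝ) ^ m.natAbs := by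
    intro m
    have habs : |(m : ℝ)| = ((m.natAbs : ℕ) : ℝ) := by
      simp [Nat.cast_natAbs]
    rw [habs, Real.rpow_neg (by norm_num), Real.rpow_natCast]
    simp [one_div, inv_pow]
  simp_rw [key]
  apply Summable.of_nat_of_neg
  · simpa using summable_geometric_of_lt_one (by norm_num : (0:ℝ) ≤ 1/2) (by norm_num)
  · simpa using summable_geometric_of_lt_one (by norm_num : (0:ℝ) ≤ 1/2) (by norm_num)

lemma term_le (x : ℝ) (m : ℤ) :
    (2 : ℝ) ^ (2 * x - 2 * (m : ℝ)) * Real.exp (-(2 : ℝ) ^ (x - (m : ℝ)))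
      ≤ 54 * (2 : ℝ) ^ (-|((m - ⌊x⌋ : ℤ) : ℝ)|) := by
  have h1 := g_le (x - (m : ℝ))
  have h2 : (2:ℝ) ^ (2 * x - 2 * (m:ℝ)) = (2:ℝ) ^ (2 * (x - (m:ℝ))) := by ring_nf
  rw [h2]
  refine h1.trans ?_
  have habs : |((m - ⌊x⌋ : ℤ) : ℝ)| ≤ |x - (m : ℝ)| + 1 := by
    have hfr1 : x - (⌊x⌋ : ℝ) < 1 := by
      have := Int.sub_one_lt_floor x; have := Int.floor_le x; linarith [Int.lt_floor_add_one x]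
    have hfr0 : 0 ≤ x - (⌊x⌋ : ℝ) := by linarith [Int.floor_le x]
    push_cast
    calc |(m : ℝ) - ⌊x⌋| = |((m:ℝ) - x) + (x - ⌊x⌋)| := by ring_nf
      _ ≤ |(m:ℝ) - x| + |x - ⌊x⌋| := abs_add_le _ _
      _ ≤ |x - (m:ℝ)| + 1 := by
          rw [abs_sub_comm]; rw [abs_of_nonneg hfr0]; linarith
  have hmono : (2:ℝ) ^ (-|x - (m:ℝ)|) ≤ (2:ℝ) ^ (1 - |((m - ⌊x⌋ : ℤ) : ℝ)|) :=
    Real.rpow_le_rpow_of_exponent_le one_le_two (by linarith)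
  calc 27 * (2:ℝ) ^ (-|x - (m:ℝ)|) ≤ 27 * (2:ℝ) ^ (1 - |((m - ⌊x⌋ : ℤ) : ℝ)|) := by
        linarith
    _ = 54 * (2:ℝ) ^ (-|((m - ⌊x⌋ : ℤ) : ℝ)|) := by
        rw [show (1 : ℝ) - |((m - ⌊x⌋ : ℤ) : ℝ)| = 1 + (-|((m - ⌊x⌋ : ℤ) : ℝ)|) by ring,
          Real.rpow_add two_pos, Real.rpow_one]; ring

lemma bound_summable (k : ℤ) :
    Summable (fun m : ℤ => 54 * (2 : ℝ) ^ (-|((m - k : ℤ) : ℝ)|)) := by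
  have h1 := (Equiv.subRight k).summable_iff
    (f := fun m : ℤ => (2 : ℝ) ^ (-|(m : ℝ)|))
  simp only [Function.comp_def, Equiv.subRight_apply] at h1
  exact (h1.mpr c_summable).mul_left 54

lemma term_nonneg (x : ℝ) (m : ℤ) :
    0 ≤ (2 : ℝ) ^ (2 * x - 2 * (m : ℝ)) * Real.exp (-(2 : ℝ) ^ (x - (m : ℝ))) := by
  positivity

lemma h_summable (x : ℝ) : Summable fun m : ℤ =>
    (2 : ℝ) ^ (2 * x - 2 * (m : ℝ)) * Real.exp (-(2 : ℝ) ^ (x - (m : ℝ))) :=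
  Summable.of_nonneg_of_le (term_nonneg x) (term_le x) (bound_summable ⌊x⌋)

theorem h_summable_periodic_bounded :
    (∀ x : ℝ, Summable fun m : ℤ =>
        (2 : ℝ) ^ (2 * x - 2 * (m : ℝ)) * Real.exp (-(2 : ℝ) ^ (x - (m : ℝ)))) ∧
    (∀ x : ℝ, h (x + 1) = h x) ∧
    ∃ M : ℝ, ∀ x : ℝ, h x ≤ M := by
  refine ⟨h_summable, ?_, ?_⟩
  · intro x
    show (∑' m : ℤ, F (x + 1) m) = ∑' m : ℤ, F x m
    calc (∑' m : ℤ, F (x + 1) m)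
        = ∑' m : ℤ, F (x + 1) ((Equiv.addRight (1 : ℤ)) m) :=
          ((Equiv.addRight (1 : ℤ)).tsum_eq (F (x + 1))).symm
      _ = ∑' m : ℤ, F x m := by
          refine tsum_congr fun m => ?_
          simp only [Equiv.coe_addRight]
          unfold F
          push_cast
          ring_nf
  · refine ⟨54 * ∑' m : ℤ, (2 : ℝ) ^ (-|(m : ℝ)|), fun x => ?_⟩
    have h1 : h x ≤ ∑' m : ℤ, 54 * (2 : ℝ) ^ (-|((m - ⌊x⌋ : ℤ) : ℝ)|) :=
      Summable.tsum_le_tsum (term_le x) (h_summable x) (bound_summable ⌊x⌋)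
    refine h1.trans ?_
    rw [tsum_mul_left]
    have : ∑' m : ℤ, (2 : ℝ) ^ (-|((m - ⌊x⌋ : ℤ) : ℝ)|) = ∑' m : ℤ, (2 : ℝ) ^ (-|(m : ℝ)|) :=
      (Equiv.subRight (⌊x⌋ : ℤ)).tsum_eq (fun m : ℤ => (2 : ℝ) ^ (-|(m : ℝ)|))
    rw [this]
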